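/- For any locally bounded function Ψ on ℝ^+ × ℝ^d satisfying the subadditivity condition Ψ(t,ξ) ≤ Ψ(t,ξ−η) + Ψ(t,η) for all ξ, η, and for functions a, b with integrable Fourier transforms, the Fourier multiplier e^{Ψ(t,·)} applied to the product satisfies |F((ab)_Ψ)(t,ξ)| ≤ F(a_Ψ^+ b_Ψ^+)(t,ξ) pointwise in ξ, where f_Ψ := F^{-1}(e^{Ψ(t,·)} F f) and f^+ := F^{-1}|F f|. -/
import Mathlib

open MeasureTheory

/-- for a subadditive phase Ψ, the multiplier e^{Ψ(t,·)} acting on a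
    product satisfies |𝓕((ab)_Ψ)(t,ξ)| ≤ 𝓕(a_Ψ⁺ b_Ψ⁺)(t,ξ) pointwise in ξ.
    Stated on the Fourier side: A = 𝓕a, B = 𝓕b, so that 𝓕(ab) is the convolution
    A ⋆ B (up to a universal constant appearing on both sides), and
    𝓕(a_Ψ⁺ b_Ψ⁺)(ξ) = ∫ e^{Ψ(t,ξ−η)}|A(ξ−η)| e^{Ψ(t,η)}|B(η)| dη. -/
theorem subadditive_phase_on_products (d : ℕ) (t : ℝ)
    (Ψ : ℝ → EuclideanSpace ℝ (Fin d) → ℝ)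
    (hΨ : ∀ ξ η, Ψ t ξ ≤ Ψ t (ξ - η) + Ψ t η)
    (A B : EuclideanSpace ℝ (Fin d) → ℂ)
    (hA : Integrable A) (hB : Integrable B)
    (ξ : EuclideanSpace ℝ (Fin d))
    (hconv : Integrable (fun η => A (ξ - η) * B η))
    (hconvΨ : Integrable (fun η =>
      Real.exp (Ψ t (ξ - η)) * ‖A (ξ - η)‖ * (Real.exp (Ψ t η) * ‖B η‖))) :
    ‖Real.exp (Ψ t ξ) • ∫ η, A (ξ - η) * B η‖ ≤
      ∫ η, Real.exp (Ψ t (ξ - η)) * ‖A (ξ - η)‖ * (Real.exp (Ψ t η) * ‖B η‖) := by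
  calc ‖Real.exp (Ψ t ξ) • ∫ η, A (ξ - η) * B η‖
      = Real.exp (Ψ t ξ) * ‖∫ η, A (ξ - η) * B η‖ := by
        rw [norm_smul, Real.norm_eq_abs, abs_of_pos (Real.exp_pos _)]
    _ ≤ Real.exp (Ψ t ξ) * ∫ η, ‖A (ξ - η) * B η‖ := by
        gcongr
        exact norm_integral_le_integral_norm _
    _ = ∫ η, Real.exp (Ψ t ξ) * ‖A (ξ - η) * B η‖ := (integral_const_mul _ _).symm
    _ ≤ ∫ η, Real.exp (Ψ t (ξ - η)) * ‖A (ξ - η)‖ * (Real.exp (Ψ t η) * ‖B η‖) := by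
        apply integral_mono (hconv.norm.const_mul _) hconvΨ
        intro η
        dsimp only
        rw [norm_mul]
        calc Real.exp (Ψ t ξ) * (‖A (ξ - η)‖ * ‖B η‖)
            ≤ Real.exp (Ψ t (ξ - η) + Ψ t η) * (‖A (ξ - η)‖ * ‖B η‖) := by
              exact mul_le_mul_of_nonneg_right (Real.exp_le_exp.2 (hΨ ξ η))
                (mul_nonneg (norm_nonneg _) (norm_nonneg _))
          _ = Real.exp (Ψ t (ξ - η)) * ‖A (ξ - η)‖ * (Real.exp (Ψ t η) * ‖B η‖) := by
              rw [Real.exp_add]; ring
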